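/- Let S and T be disjoint sets of roots of L satisfying: (i) whenever β ∈ T, γ ∈ S and β + γ is a root, one has β + γ ∈ S; (ii) −β ∉ S for every β ∈ T; (iii) no sum of a nonempty finite family (with repetitions allowed) of elements of T equals zero. Let h ∈ H satisfy α(h) ≠ 0 for every α ∈ S, and let n ∈ Σ_{β∈T} L_β. Then the subspace V := Σ_{γ∈S} L_γ is invariant under ad(h + n), and ad(h + n) restricts to a bijective linear endomorphism of V. (This is the key computation, with T the positive roots of the Levi subalgebra and S the remaining positive roots, showing in the paper's anti-generic torsor lemma that ad_x : 𝔳_I → 𝔳_I is bijective for x lying over the anti-generic locus.) -/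

import Mathlib

open LieModule LieAlgebra

lemma exists_min_aux {A : Type*} [AddCommGroup A] (T S : Set A) (hfin : S.Finite)
    (hne : S.Nonempty)
    (hsum : ∀ (m : ℕ) (c : Fin (m + 1) → A), (∀ i, c i ∈ T) → ∑ i, c i ≠ 0) :
    ∃ γ0 ∈ S, ∀ β ∈ T, ∀ γ ∈ S, β + γ ≠ γ0 := by
  by_contra hcon
  push_neg at hcon
  have hcon' : ∀ γ0 : S, ∃ β : A, β ∈ T ∧ ∃ γ : S, β + (γ : A) = (γ0 : A) := by
    rintro ⟨γ0, hγ0⟩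
    obtain ⟨β, hβ, γ, hγ, e⟩ := hcon γ0 hγ0
    exact ⟨β, hβ, ⟨γ, hγ⟩, e⟩
  choose b hbT p hbp using hcon'
  obtain ⟨s0, hs0⟩ := hne
  set seq : ℕ → S := fun k => p^[k] ⟨s0, hs0⟩ with hseq
  have hstep : ∀ k, seq (k + 1) = p (seq k) := fun k => Function.iterate_succ_apply' p k _
  have tele : ∀ m k, (seq k : A) = (∑ i ∈ Finset.range m, b (seq (k + i))) + (seq (k + m) : A) := by
    intro m
    induction m with
    | zero => intro k; simp
    | succ m ih =>
      intro k
      have h1 : (seq k : A) = b (seq k) + (seq (k + 1) : A) := by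
        rw [hstep]; exact (hbp (seq k)).symm
      rw [Finset.sum_range_succ']
      have h2 : ∑ i ∈ Finset.range m, b (seq (k + (i + 1)))
          = ∑ i ∈ Finset.range m, b (seq ((k + 1) + i)) :=
        Finset.sum_congr rfl fun i _ => by rw [show k + (i + 1) = (k + 1) + i by omega]
      calc (seq k : A) = b (seq k) + (seq (k + 1) : A) := h1
        _ = b (seq k) + ((∑ i ∈ Finset.range m, b (seq ((k + 1) + i))) + (seq ((k + 1) + m) : A)) := by
            rw [← ih (k + 1)]
        _ = (∑ i ∈ Finset.range m, b (seq (k + (i + 1))) + b (seq (k + 0))) + (seq (k + (m + 1)) : A) := by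
            rw [h2, show k + 0 = k by omega, show (k + 1) + m = k + (m + 1) by omega]
            abel
  haveI : Finite S := hfin.to_subtype
  obtain ⟨i, j, hij_ne, hij⟩ := Finite.exists_ne_map_eq_of_infinite seq
  wlog hlt : i < j generalizing i j
  · exact this j i hij_ne.symm hij.symm (by omega)
  have hz : (∑ t ∈ Finset.range (j - i), b (seq (i + t))) = 0 := by
    have h3 := tele (j - i) i
    rw [show i + (j - i) = j by omega, ← hij] at h3
    exact right_eq_add.mp h3
  have hcontra := hsum (j - i - 1) (fun t => b (seq (i + (t : ℕ)))) (fun t => hbT _)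
  apply hcontra
  rw [Fin.sum_univ_eq_sum_range (fun t => b (seq (i + t))) (j - i - 1 + 1),
    show j - i - 1 + 1 = j - i by omega]
  exact hz
lemma aux_inj
    {K : Type*} [Field K]
    {L : Type*} [LieRing L] [LieAlgebra K L] [Module.Finite K L]
    (H : LieSubalgebra K L) [H.IsCartanSubalgebra]
    (T : Set (H → K)) (hT0 : ∀ β ∈ T, β ≠ (0 : H → K))
    (hsum : ∀ (m : ℕ) (c : Fin (m + 1) → (H → K)), (∀ i, c i ∈ T) → ∑ i, c i ≠ 0)
    (h : H) (n : L) (hn : n ∈ ⨆ β ∈ T, rootSpace H β) :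
    ∀ (N : ℕ) (S : Set (H → K)), S.Finite → S.ncard ≤ N → (∀ γ ∈ S, γ h ≠ 0) →
      ∀ v ∈ (⨆ γ ∈ S, (rootSpace H γ : LieSubmodule K H L).toSubmodule : Submodule K L),
        ⁅(h : L) + n, v⁆ = 0 → v = 0 := by
  have hnS : n ∈ (⨆ β ∈ T, (rootSpace H β : LieSubmodule K H L).toSubmodule : Submodule K L) := by
    have he : (⨆ β ∈ T, (rootSpace H β : LieSubmodule K H L).toSubmodule : Submodule K L)
        = ((⨆ β ∈ T, rootSpace H β : LieSubmodule K H L) : Submodule K L) := by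
      simp [LieSubmodule.iSup_toSubmodule]
    rw [he]
    exact (LieSubmodule.mem_toSubmodule _).mpr hn
  intro N
  induction N with
  | zero =>
    intro S hfin hcard _ v hv _
    have hS : S = ∅ := by rw [← Set.ncard_eq_zero hfin]; omega
    subst hS
    simpa using hv
  | succ N ih =>
    intro S hfin hcard hgen v hv hDv
    rcases S.eq_empty_or_nonempty with rfl | hne
    · simpa using hv
    obtain ⟨γ0, hγ0S, hmin⟩ := exists_min_aux T S hfin hne hsum
    have hins : S = insert γ0 (S \ {γ0}) := by
      simp [Set.insert_eq_self.mpr, hγ0S, Set.insert_diff_singleton]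
    rw [hins, iSup_insert] at hv
    obtain ⟨v0, hv0, v', hv', hvsum⟩ := Submodule.mem_sup.mp hv
    have hv0r : v0 ∈ rootSpace H γ0 := hv0
    set UL : LieSubmodule K H L := ⨆ χ, ⨆ _ : χ ≠ γ0, genWeightSpace L χ with hUL
    have hUS : (UL : Submodule K L) = ⨆ χ, ⨆ _ : χ ≠ γ0,
        ((genWeightSpace L χ : LieSubmodule K H L) : Submodule K L) := by
      simp [hUL, LieSubmodule.iSup_toSubmodule]
    have hUmem : ∀ (χ : H → K), χ ≠ γ0 → ∀ z ∈ genWeightSpace L χ,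
        z ∈ (UL : Submodule K L) := by
      intro χ hχ z hz
      rw [hUS]
      exact le_iSup₂ (f := fun χ (_ : χ ≠ γ0) =>
        ((genWeightSpace L χ : LieSubmodule K H L) : Submodule K L)) χ hχ
        ((LieSubmodule.mem_toSubmodule _).mpr hz)
    -- ⁅n, z⁆ ∈ UL for suitable z
    have hkey : ∀ (z : L) (γ : H → K), γ ∈ S → z ∈ rootSpace H γ →
        ⁅n, z⁆ ∈ (UL : Submodule K L) := by
      intro z γ hγS hz
      have hle : (⨆ β ∈ T, (rootSpace H β : LieSubmodule K H L).toSubmodule : Submodule K L)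
          ≤ Submodule.comap (-(ad K L z)) (UL : Submodule K L) := by
        refine iSup₂_le fun β hβ => fun y hy => ?_
        simp only [Submodule.mem_comap, LinearMap.neg_apply, ad_apply]
        rw [lie_skew]
        exact hUmem (β + γ) (hmin β hβ γ hγS)
          _ (lie_mem_genWeightSpace_of_mem_genWeightSpace hy hz)
      have := hle hnS
      simp only [Submodule.mem_comap, LinearMap.neg_apply, ad_apply, lie_skew] at this
      exact this
    have hnv0 : ⁅n, v0⁆ ∈ (UL : Submodule K L) := by
      -- here the relevant exclusion is β + γ0 ≠ γ0 since β ≠ 0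
      have hle : (⨆ β ∈ T, (rootSpace H β : LieSubmodule K H L).toSubmodule : Submodule K L)
          ≤ Submodule.comap (-(ad K L v0)) (UL : Submodule K L) := by
        refine iSup₂_le fun β hβ => fun y hy => ?_
        simp only [Submodule.mem_comap, LinearMap.neg_apply, ad_apply]
        rw [lie_skew]
        have hne0 : β + γ0 ≠ γ0 := fun hc => hT0 β hβ (by
          have := congrArg (fun f => f - γ0) hc; simpa using this)
        exact hUmem (β + γ0) hne0 _ (lie_mem_genWeightSpace_of_mem_genWeightSpace hy hv0r)
      have := hle hnS
      simp only [Submodule.mem_comap, LinearMap.neg_apply, ad_apply, lie_skew] at this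
      exact this
    have hv'U : ⁅(h : L) + n, v'⁆ ∈ (UL : Submodule K L) := by
      have hle : (⨆ γ ∈ S \ {γ0}, (rootSpace H γ : LieSubmodule K H L).toSubmodule
          : Submodule K L) ≤ Submodule.comap (ad K L ((h : L) + n)) (UL : Submodule K L) := by
        refine iSup₂_le fun γ hγ => fun w hw => ?_
        simp only [Submodule.mem_comap, ad_apply, add_lie]
        have hwr : w ∈ rootSpace H γ := hw
        have h1' : ⁅(h : L), w⁆ ∈ (UL : Submodule K L) :=
          hUmem γ hγ.2 _ ((rootSpace H γ).lie_mem hwr)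
        exact add_mem h1' (hkey w γ hγ.1 hwr)
      exact hle hv'
    have hbr : ⁅(h : L), v0⁆ = -(⁅n, v0⁆ + ⁅(h : L) + n, v'⁆) := by
      have h0 : ⁅(h : L) + n, v0⁆ + ⁅(h : L) + n, v'⁆ = 0 := by
        rw [← lie_add, hvsum]; exact hDv
      rw [add_lie] at h0
      linear_combination (norm := abel) h0
    have hhv0U : ⁅(h : L), v0⁆ ∈ (UL : Submodule K L) := by
      rw [hbr]; exact neg_mem (add_mem hnv0 hv'U)
    have hhv0γ0 : ⁅(h : L), v0⁆ ∈ genWeightSpace L γ0 := (rootSpace H γ0).lie_mem hv0r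
    have hhv0 : ⁅(h : L), v0⁆ = 0 := by
      have hmem : ⁅(h : L), v0⁆ ∈ (genWeightSpace L γ0 ⊓ UL : LieSubmodule K H L) :=
        ⟨hhv0γ0, hhv0U⟩
      have hbot := (iSupIndep_genWeightSpace K H L γ0).le_bot hmem
      simpa using hbot
    have hv0z : v0 = 0 := by
      have hc : γ0 h ≠ 0 := hgen γ0 hγ0S
      obtain ⟨k, hk⟩ := (mem_genWeightSpace L γ0 v0).mp hv0r h
      set f : Module.End K L := toEnd K H L h with hf
      have hfv0 : f v0 = 0 := by
        have he : f v0 = ⁅(h : L), v0⁆ := rfl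
        rw [he, hhv0]
      have hpow : ∀ j : ℕ, ((f - γ0 h • 1) ^ j) v0 = ((-(γ0 h)) ^ j) • v0 := by
        intro j
        induction j with
        | zero => simp
        | succ j ihj =>
          rw [pow_succ, Module.End.mul_apply]
          have he : (f - γ0 h • 1) v0 = (-(γ0 h)) • v0 := by
            simp [LinearMap.sub_apply, hfv0]
          rw [he, map_smul, ihj, smul_smul, ← pow_succ']
      rw [hpow k] at hk
      rcases smul_eq_zero.mp hk with hz | hz
      · exact absurd hz (pow_ne_zero _ (neg_ne_zero.mpr hc))
      · exact hz
    have hvv' : v = v' := by rw [← hvsum, hv0z, zero_add]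
    have hcard' : (S \ {γ0}).ncard ≤ N := by
      have := Set.ncard_diff_singleton_lt_of_mem hγ0S hfin
      omega
    refine hvv'.trans (ih (S \ {γ0}) hfin.diff hcard' (fun γ hγ => hgen γ hγ.1) v' hv' ?_)
    rw [← hvv']; exact hDv
/-- **Bijectivity of `ad (h + n)` on a sum of root spaces avoided by `h`.**
`K` algebraically closed of characteristic zero, `L` a finite-dimensional Lie algebra over `K`
with nondegenerate Killing form, `H` a Cartan subalgebra.  Let `S` and `T` be disjoint sets of
roots with: (i) whenever `β ∈ T`, `γ ∈ S` and `β + γ` is a root, `β + γ ∈ S`; (ii) `-β ∉ S`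
for every `β ∈ T`; (iii) no nonempty finite family (repetitions allowed) of elements of `T`
sums to zero.  Let `h ∈ H` satisfy `α h ≠ 0` for all `α ∈ S` and let `n ∈ Σ_{β ∈ T} L_β`.
Then `V := Σ_{γ ∈ S} L_γ` is invariant under `ad (h + n)`, which restricts to a bijective
endomorphism of `V`. -/
theorem ad_restrict_bijective_on_sum_rootSpaces
    {K : Type*} [Field K] [IsAlgClosed K] [CharZero K]
    {L : Type*} [LieRing L] [LieAlgebra K L] [Module.Finite K L]
    [LieAlgebra.IsKilling K L]
    (H : LieSubalgebra K L) [H.IsCartanSubalgebra]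
    (S T : Set (H → K)) (hST : Disjoint S T)
    (hS : ∀ γ ∈ S, γ ≠ 0 ∧ rootSpace H γ ≠ ⊥)
    (hT : ∀ β ∈ T, β ≠ 0 ∧ rootSpace H β ≠ ⊥)
    (hadd : ∀ β ∈ T, ∀ γ ∈ S, β + γ ≠ 0 → rootSpace H (β + γ) ≠ ⊥ → β + γ ∈ S)
    (hneg : ∀ β ∈ T, -β ∉ S)
    (hsum : ∀ (m : ℕ) (c : Fin (m + 1) → (H → K)),
      (∀ i, c i ∈ T) → ∑ i, c i ≠ 0)
    (h : H) (hgen : ∀ γ ∈ S, γ h ≠ 0)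
    (n : L) (hn : n ∈ ⨆ β ∈ T, rootSpace H β)
    (V : Submodule K L) (hV : V = ⨆ γ ∈ S, (rootSpace H γ : LieSubmodule K H L).toSubmodule) :
    ∃ hmap : ∀ v ∈ V, LieAlgebra.ad K L ((h : L) + n) v ∈ V,
      Function.Bijective ((LieAlgebra.ad K L ((h : L) + n)).restrict hmap) := by
  have hnS : n ∈ (⨆ β ∈ T, (rootSpace H β : LieSubmodule K H L).toSubmodule : Submodule K L) := by
    have he : (⨆ β ∈ T, (rootSpace H β : LieSubmodule K H L).toSubmodule : Submodule K L)
        = ((⨆ β ∈ T, rootSpace H β : LieSubmodule K H L) : Submodule K L) := by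
      simp [LieSubmodule.iSup_toSubmodule]
    rw [he]
    exact (LieSubmodule.mem_toSubmodule _).mpr hn
  -- invariance
  have hmap : ∀ v ∈ V, LieAlgebra.ad K L ((h : L) + n) v ∈ V := by
    have hle : V ≤ Submodule.comap (ad K L ((h : L) + n)) V := by
      conv_lhs => rw [hV]
      refine iSup₂_le fun γ hγ => fun w hw => ?_
      simp only [Submodule.mem_comap, ad_apply, add_lie]
      have hwr : w ∈ rootSpace H γ := hw
      have h1 : ⁅(h : L), w⁆ ∈ V := by
        rw [hV]
        exact le_iSup₂ (f := fun χ (_ : χ ∈ S) =>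
          (rootSpace H χ : LieSubmodule K H L).toSubmodule) γ hγ
          ((LieSubmodule.mem_toSubmodule _).mpr ((rootSpace H γ).lie_mem hwr))
      have h2 : ⁅n, w⁆ ∈ V := by
        have hle2 : (⨆ β ∈ T, (rootSpace H β : LieSubmodule K H L).toSubmodule : Submodule K L)
            ≤ Submodule.comap (-(ad K L w)) V := by
          refine iSup₂_le fun β hβ => fun y hy => ?_
          simp only [Submodule.mem_comap, LinearMap.neg_apply, ad_apply]
          rw [lie_skew]
          have hmem : ⁅y, w⁆ ∈ rootSpace H (β + γ) :=
            lie_mem_genWeightSpace_of_mem_genWeightSpace hy hwr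
          by_cases hbot : rootSpace H (β + γ) = ⊥
          · rw [hbot] at hmem
            simp only [LieSubmodule.mem_bot] at hmem
            rw [hmem]; exact V.zero_mem
          by_cases hzero : β + γ = 0
          · exact absurd (show -β ∈ S by
              have hγβ : γ = -β := eq_neg_of_add_eq_zero_right hzero
              rwa [← hγβ]) (hneg β hβ)
          · have hadd' : β + γ ∈ S := hadd β hβ γ hγ hzero hbot
            rw [hV]
            exact le_iSup₂ (f := fun χ (_ : χ ∈ S) =>
              (rootSpace H χ : LieSubmodule K H L).toSubmodule) (β + γ) hadd'
              ((LieSubmodule.mem_toSubmodule _).mpr hmem)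
        have := hle2 hnS
        simp only [Submodule.mem_comap, LinearMap.neg_apply, ad_apply, lie_skew] at this
        exact this
      exact add_mem h1 h2
    intro v hv
    exact hle hv
  refine ⟨hmap, ?_⟩
  have hfinS : S.Finite :=
    Set.Finite.subset (finite_genWeightSpace_ne_bot K H L) (fun γ hγ => (hS γ hγ).2)
  have hinj : Function.Injective ((LieAlgebra.ad K L ((h : L) + n)).restrict hmap) := by
    intro x y hxy
    have hxy' : LieAlgebra.ad K L ((h : L) + n) (x : L) = LieAlgebra.ad K L ((h : L) + n) y :=
      congrArg Subtype.val hxy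
    have hDv : ⁅(h : L) + n, (x : L) - y⁆ = 0 := by
      rw [lie_sub, sub_eq_zero]
      simpa only [ad_apply] using hxy'
    have hmemv : (x : L) - y ∈ (⨆ γ ∈ S, (rootSpace H γ : LieSubmodule K H L).toSubmodule
        : Submodule K L) := hV ▸ sub_mem x.2 y.2
    have := aux_inj H T (fun β hβ => (hT β hβ).1) hsum h n hn S.ncard S hfinS le_rfl hgen
      ((x : L) - y) hmemv hDv
    exact Subtype.ext (sub_eq_zero.mp this)
  exact ⟨hinj, LinearMap.injective_iff_surjective.mp hinj⟩
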